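/- Any two elements M₀, M₁ of Sp(2n) can be joined by a positive path; i.e., there exists a smooth path μ : [0,1] → Sp(2n) with μ(0) = M₀, μ(1) = M₁, and μ'(t) = J P(t) μ(t) for some continuous family of symmetric positive definite matrices P(t). -/

import Mathlib

open Matrix Set

noncomputable section

def J2 : Matrix (Fin 2) (Fin 2) ℝ := !![0, -1; 1, 0]

/-- The standard symplectic matrix `J = diag(J₂, …, J₂)`. -/
def Jn (n : ℕ) : Matrix (Fin 2 × Fin n) (Fin 2 × Fin n) ℝ :=
  Matrix.blockDiagonal fun _ => J2

namespace PosPath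

variable {n : ℕ}

lemma J2_transpose : J2ᵀ = -J2 := by
  ext i j; fin_cases i <;> fin_cases j <;> simp [J2]

lemma J2_mul_J2 : J2 * J2 = -1 := by
  ext i j; fin_cases i <;> fin_cases j <;>
    simp [J2, Matrix.mul_apply, Fin.sum_univ_two]

lemma Jn_transpose : (Jn n)ᵀ = -Jn n := by
  ext ⟨a, i⟩ ⟨b, j⟩
  simp only [Matrix.transpose_apply, Jn, Matrix.blockDiagonal_apply, Matrix.neg_apply]
  rcases eq_or_ne i j with h | h
  · subst h
    have : J2 b a = -J2 a b := by
      have := congrFun (congrFun J2_transpose a) b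
      simpa [Matrix.transpose_apply] using this
    simp [this]
  · simp [h, Ne.symm h]

lemma Jn_mul_Jn : Jn n * Jn n = -1 := by
  rw [Jn, ← Matrix.blockDiagonal_mul]
  ext ⟨a, i⟩ ⟨b, j⟩
  simp only [Matrix.blockDiagonal_apply, J2_mul_J2, Matrix.neg_apply, Matrix.one_apply]
  rcases eq_or_ne i j with h | h
  · subst h
    rcases eq_or_ne a b with h' | h' <;> simp [h', Prod.ext_iff]
  · simp [h, Prod.ext_iff]

lemma Jn_tr_mul_Jn : (Jn n)ᵀ * Jn n = 1 := by
  rw [Jn_transpose, Matrix.neg_mul, Jn_mul_Jn, neg_neg]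

lemma Jn_mul_Jn_tr : Jn n * (Jn n)ᵀ = 1 := by
  rw [Jn_transpose, Matrix.mul_neg, Jn_mul_Jn, neg_neg]

lemma hJentry : ∀ p q : Fin 2 × Fin n, Jn n q p = - Jn n p q := fun p q => by
  have := congrFun (congrFun (Jn_transpose (n := n)) p) q
  simpa [Matrix.transpose_apply] using this

/-- The symplectic form `ω u v = uᵀ J v`. -/
def om (u v : Fin 2 × Fin n → ℝ) : ℝ := u ᵥ* Jn n ⬝ᵥ v

lemma om_eq_sum (u v : Fin 2 × Fin n → ℝ) :
    om u v = ∑ p, ∑ q, u p * Jn n p q * v q := by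
  simp only [om, Matrix.vecMul, dotProduct, Finset.sum_mul]
  rw [Finset.sum_comm]

lemma om_eq (u v : Fin 2 × Fin n → ℝ) : om u v = u ⬝ᵥ (Jn n *ᵥ v) :=
  (Matrix.dotProduct_mulVec u (Jn n) v).symm

lemma om_skew (u v : Fin 2 × Fin n → ℝ) : om v u = -om u v := by
  rw [om_eq_sum, om_eq_sum]
  rw [Finset.sum_comm]
  rw [← Finset.sum_neg_distrib]
  refine Finset.sum_congr rfl fun q _ => ?_
  rw [← Finset.sum_neg_distrib]
  refine Finset.sum_congr rfl fun p _ => ?_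
  rw [hJentry q p]  -- replaces? hJentry q p : Jn n p q = - Jn n q p
  ring

lemma om_self (u : Fin 2 × Fin n → ℝ) : om u u = 0 := by
  have := om_skew u u; linarith

lemma om_add_left (u v w : Fin 2 × Fin n → ℝ) : om (u + v) w = om u w + om v w := by
  simp [om, Matrix.add_vecMul, add_dotProduct]

lemma om_add_right (u v w : Fin 2 × Fin n → ℝ) : om u (v + w) = om u v + om u w := by
  simp [om, dotProduct_add]

lemma om_sub_left (u v w : Fin 2 × Fin n → ℝ) : om (u - v) w = om u w - om v w := by
  simp [om, Matrix.sub_vecMul, sub_dotProduct]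

lemma om_smul_right (c : ℝ) (u v : Fin 2 × Fin n → ℝ) : om u (c • v) = c * om u v := by
  simp [om, dotProduct_smul, smul_eq_mul, mul_comm]

lemma om_zero_left (v : Fin 2 × Fin n → ℝ) : om 0 v = 0 := by simp [om]

lemma om_zero_right (v : Fin 2 × Fin n → ℝ) : om v 0 = 0 := by simp [om]

/-- row vector `vᵀ J`. -/
def rv (v : Fin 2 × Fin n → ℝ) : Fin 2 × Fin n → ℝ := v ᵥ* Jn n

lemma rv_dot (v x : Fin 2 × Fin n → ℝ) : rv v ⬝ᵥ x = om v x := rfl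

lemma dot_rv (x v : Fin 2 × Fin n → ℝ) : x ⬝ᵥ rv v = om v x := dotProduct_comm _ _

lemma rv_eq_JnT_mulVec (v : Fin 2 × Fin n → ℝ) : rv v = (Jn n)ᵀ *ᵥ v :=
  (Matrix.mulVec_transpose _ _).symm

lemma Jn_mulVec_rv (v : Fin 2 × Fin n → ℝ) : Jn n *ᵥ rv v = v := by
  rw [rv_eq_JnT_mulVec, Matrix.mulVec_mulVec, Jn_mul_Jn_tr, Matrix.one_mulVec]

lemma Jn_mulVec (v : Fin 2 × Fin n → ℝ) : Jn n *ᵥ v = -rv v := by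
  rw [rv_eq_JnT_mulVec, Jn_transpose, Matrix.neg_mulVec, neg_neg]

lemma rv_eq_zero_iff (v : Fin 2 × Fin n → ℝ) : rv v = 0 ↔ v = 0 := by
  constructor
  · intro h
    have := congrArg (fun x => Jn n *ᵥ x) h
    simpa [Jn_mulVec_rv] using this
  · intro h; simp [rv, h]

lemma om_rv_self_pos (v : Fin 2 × Fin n → ℝ) (hv : v ≠ 0) : 0 < om v (rv v) := by
  rw [← rv_dot]
  have hrv : rv v ≠ 0 := fun h => hv ((rv_eq_zero_iff v).mp h)
  obtain ⟨i, hi⟩ := Function.ne_iff.mp hrv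
  have h0 : (0 : ℝ) < rv v i * rv v i := mul_self_pos.mpr (by simpa using hi)
  exact Finset.sum_pos' (fun j _ => mul_self_nonneg _) ⟨i, Finset.mem_univ i, h0⟩

-- vecMulVec algebra
lemma vecMulVec_transpose' (a b : Fin 2 × Fin n → ℝ) :
    (Matrix.vecMulVec a b)ᵀ = Matrix.vecMulVec b a := by
  ext i j; simp [Matrix.vecMulVec_apply, mul_comm]

lemma vecMulVec_neg_left (a b : Fin 2 × Fin n → ℝ) :
    Matrix.vecMulVec (-a) b = -Matrix.vecMulVec a b := by
  ext i j; simp [Matrix.vecMulVec_apply]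

lemma vecMulVec_mul (a b : Fin 2 × Fin n → ℝ) (A : Matrix (Fin 2 × Fin n) (Fin 2 × Fin n) ℝ) :
    Matrix.vecMulVec a b * A = Matrix.vecMulVec a (b ᵥ* A) := by
  ext i j
  simp only [Matrix.mul_apply, Matrix.vecMulVec_apply, Matrix.vecMul, dotProduct,
    Finset.mul_sum]
  exact Finset.sum_congr rfl fun k _ => by ring

lemma mul_vecMulVec (a b : Fin 2 × Fin n → ℝ) (A : Matrix (Fin 2 × Fin n) (Fin 2 × Fin n) ℝ) :
    A * Matrix.vecMulVec a b = Matrix.vecMulVec (A *ᵥ a) b := by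
  ext i j
  simp only [Matrix.mul_apply, Matrix.vecMulVec_apply, Matrix.mulVec, dotProduct,
    Finset.sum_mul]
  exact Finset.sum_congr rfl fun k _ => by ring

lemma vecMulVec_mul_vecMulVec (a b c d : Fin 2 × Fin n → ℝ) :
    Matrix.vecMulVec a b * Matrix.vecMulVec c d = (b ⬝ᵥ c) • Matrix.vecMulVec a d := by
  ext i j
  simp only [Matrix.mul_apply, Matrix.vecMulVec_apply, Matrix.smul_apply, dotProduct,
    smul_eq_mul, Finset.sum_mul]
  exact Finset.sum_congr rfl fun k _ => by ring

lemma vecMulVec_mulVec (a b x : Fin 2 × Fin n → ℝ) :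
    Matrix.vecMulVec a b *ᵥ x = (b ⬝ᵥ x) • a := by
  ext i
  simp only [Matrix.mulVec, Matrix.vecMulVec_apply, dotProduct, Pi.smul_apply,
    smul_eq_mul, Finset.sum_mul]
  exact Finset.sum_congr rfl fun k _ => by ring

/-- `N = c • v (vᵀJ)`, the nilpotent part of a transvection. -/
def tmat (v : Fin 2 × Fin n → ℝ) (c : ℝ) : Matrix (Fin 2 × Fin n) (Fin 2 × Fin n) ℝ :=
  c • Matrix.vecMulVec v (rv v)

/-- Symplectic transvection `1 + c v vᵀ J`. -/
def tv (v : Fin 2 × Fin n → ℝ) (c : ℝ) : Matrix (Fin 2 × Fin n) (Fin 2 × Fin n) ℝ :=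
  1 + tmat v c

/-- `S = c (Jᵀv)(Jᵀv)ᵀ`, so that `J * S = N`. -/
def smat (v : Fin 2 × Fin n → ℝ) (c : ℝ) : Matrix (Fin 2 × Fin n) (Fin 2 × Fin n) ℝ :=
  c • Matrix.vecMulVec (rv v) (rv v)

lemma tmat_mul_tmat (v : Fin 2 × Fin n → ℝ) (c c' : ℝ) : tmat v c * tmat v c' = 0 := by
  simp only [tmat, Matrix.smul_mul, Matrix.mul_smul, vecMulVec_mul_vecMulVec]
  rw [rv_dot, om_self]
  simp

lemma tmat_add (v : Fin 2 × Fin n → ℝ) (c c' : ℝ) : tmat v c + tmat v c' = tmat v (c + c') := by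
  simp [tmat, add_smul]

lemma tv_mul_tv (v : Fin 2 × Fin n → ℝ) (c c' : ℝ) : tv v c * tv v c' = tv v (c + c') := by
  simp only [tv, add_mul, mul_add, one_mul, mul_one, tmat_mul_tmat, add_zero]
  rw [add_assoc, tmat_add]

lemma tv_mul_tv_neg (v : Fin 2 × Fin n → ℝ) (c : ℝ) : tv v c * tv v (-c) = 1 := by
  rw [tv_mul_tv]; simp [tv, tmat]

lemma Jn_mul_smat (v : Fin 2 × Fin n → ℝ) (c : ℝ) : Jn n * smat v c = tmat v c := by
  simp only [smat, tmat, Matrix.mul_smul, mul_vecMulVec, Jn_mulVec_rv]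

lemma smat_transpose (v : Fin 2 × Fin n → ℝ) (c : ℝ) : (smat v c)ᵀ = smat v c := by
  simp [smat, Matrix.transpose_smul, vecMulVec_transpose']

lemma tmat_tr_mul_J (v : Fin 2 × Fin n → ℝ) (c : ℝ) : (tmat v c)ᵀ * Jn n = smat v c := by
  simp only [tmat, Matrix.transpose_smul, vecMulVec_transpose', Matrix.smul_mul, vecMulVec_mul,
    smat]
  rfl

lemma J_mul_tmat (v : Fin 2 × Fin n → ℝ) (c : ℝ) : Jn n * tmat v c = -smat v c := by
  simp only [tmat, Matrix.mul_smul, mul_vecMulVec, Jn_mulVec, vecMulVec_neg_left, smat]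
  simp

lemma smat_mul_tmat (v : Fin 2 × Fin n → ℝ) (c c' : ℝ) : smat v c * tmat v c' = 0 := by
  simp only [smat, tmat, Matrix.smul_mul, Matrix.mul_smul, vecMulVec_mul_vecMulVec]
  rw [rv_dot, om_self]
  simp

lemma tv_symplectic (v : Fin 2 × Fin n → ℝ) (c : ℝ) :
    (tv v c)ᵀ * Jn n * tv v c = Jn n := by
  simp only [tv, Matrix.transpose_add, Matrix.transpose_one, add_mul, mul_add, one_mul, mul_one]
  rw [tmat_tr_mul_J, J_mul_tmat, smat_mul_tmat]
  abel

lemma tv_mulVec (v : Fin 2 × Fin n → ℝ) (c : ℝ) (x : Fin 2 × Fin n → ℝ) :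
    tv v c *ᵥ x = x + (c * om v x) • v := by
  simp only [tv, tmat, Matrix.add_mulVec, Matrix.one_mulVec, Matrix.smul_mulVec,
    vecMulVec_mulVec, rv_dot, smul_smul]


/-- Products of transvections. -/
def Gen (M : Matrix (Fin 2 × Fin n) (Fin 2 × Fin n) ℝ) : Prop :=
  ∃ l : List ((Fin 2 × Fin n → ℝ) × ℝ), (l.map fun p => tv p.1 p.2).prod = M

lemma Gen_one : Gen (1 : Matrix (Fin 2 × Fin n) (Fin 2 × Fin n) ℝ) := ⟨[], rfl⟩

lemma Gen_tv (v : Fin 2 × Fin n → ℝ) (c : ℝ) : Gen (tv v c) := ⟨[(v, c)], by simp⟩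

lemma Gen_mul {M N : Matrix (Fin 2 × Fin n) (Fin 2 × Fin n) ℝ} (hM : Gen M) (hN : Gen N) : Gen (M * N) := by
  obtain ⟨l, hl⟩ := hM; obtain ⟨l', hl'⟩ := hN
  exact ⟨l ++ l', by simp [hl, hl']⟩

lemma Gen_symplectic {M : Matrix (Fin 2 × Fin n) (Fin 2 × Fin n) ℝ} (hM : Gen M) : Mᵀ * Jn n * M = Jn n := by
  obtain ⟨l, hl⟩ := hM
  induction l generalizing M with
  | nil => simp [← hl]
  | cons p l ih =>
    have h := ih (M := (l.map fun p => tv p.1 p.2).prod) rfl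
    rw [← hl]
    simp only [List.map_cons, List.prod_cons, Matrix.transpose_mul]
    calc (l.map fun p => tv p.1 p.2).prodᵀ * (tv p.1 p.2)ᵀ * Jn n * (tv p.1 p.2 * (l.map fun p => tv p.1 p.2).prod)
        = (l.map fun p => tv p.1 p.2).prodᵀ * ((tv p.1 p.2)ᵀ * Jn n * tv p.1 p.2) * (l.map fun p => tv p.1 p.2).prod := by
          noncomm_ring
      _ = Jn n := by rw [tv_symplectic, h]

lemma Gen_inv {M : Matrix (Fin 2 × Fin n) (Fin 2 × Fin n) ℝ} (hM : Gen M) : ∃ M', Gen M' ∧ M' * M = 1 ∧ M * M' = 1 := by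
  obtain ⟨l, hl⟩ := hM
  induction l generalizing M with
  | nil => exact ⟨1, Gen_one, by simp [← hl], by simp [← hl]⟩
  | cons p l ih =>
    obtain ⟨K, hK, hK1, hK2⟩ := ih (M := (l.map fun p => tv p.1 p.2).prod) rfl
    refine ⟨K * tv p.1 (-p.2), Gen_mul hK (Gen_tv _ _), ?_, ?_⟩
    · rw [← hl]
      simp only [List.map_cons, List.prod_cons]
      calc K * tv p.1 (-p.2) * (tv p.1 p.2 * (l.map fun p => tv p.1 p.2).prod)
          = K * (tv p.1 (-p.2) * tv p.1 p.2) * (l.map fun p => tv p.1 p.2).prod := by noncomm_ring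
        _ = 1 := by
            rw [show tv p.1 (-p.2) * tv p.1 p.2 = 1 from by simpa using tv_mul_tv_neg p.1 (-p.2)]
            rw [mul_one, hK1]
    · rw [← hl]
      simp only [List.map_cons, List.prod_cons]
      calc tv p.1 p.2 * (l.map fun p => tv p.1 p.2).prod * (K * tv p.1 (-p.2))
          = tv p.1 p.2 * ((l.map fun p => tv p.1 p.2).prod * K) * tv p.1 (-p.2) := by noncomm_ring
        _ = 1 := by rw [hK2, mul_one, tv_mul_tv_neg]

lemma symplectic_om {M : Matrix (Fin 2 × Fin n) (Fin 2 × Fin n) ℝ} (hM : Mᵀ * Jn n * M = Jn n) (u v : Fin 2 × Fin n → ℝ) :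
    om (M *ᵥ u) (M *ᵥ v) = om u v := by
  simp only [om]
  rw [show M *ᵥ u = u ᵥ* Mᵀ from (Matrix.vecMul_transpose M u).symm]
  rw [Matrix.dotProduct_mulVec, Matrix.vecMul_vecMul, Matrix.vecMul_vecMul, ← Matrix.mul_assoc,
    hM]

lemma om_ne_zero_left {u v : Fin 2 × Fin n → ℝ} (h : om u v ≠ 0) : u ≠ 0 := by
  intro hu; exact h (by simp [hu, om_zero_left])

lemma om_ne_zero_right {u v : Fin 2 × Fin n → ℝ} (h : om u v ≠ 0) : v ≠ 0 := by
  intro hv; exact h (by simp [hv, om_zero_right])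

/-- One transvection moves `u` to `v` when `ω u v ≠ 0`. -/
lemma move_single {u v : Fin 2 × Fin n → ℝ} (h : om u v ≠ 0) :
    tv (v - u) (1 / om v u) *ᵥ u = v := by
  rw [tv_mulVec, om_sub_left, om_self, sub_zero]
  have hvu : om v u ≠ 0 := by rw [om_skew]; simpa using h
  rw [one_div, inv_mul_cancel₀ hvu, one_smul]
  abel

/-- Transvections act transitively on nonzero vectors. -/
lemma move_any {u v : Fin 2 × Fin n → ℝ} (hu : u ≠ 0) (hv : v ≠ 0) :
    ∃ T : Matrix (Fin 2 × Fin n) (Fin 2 × Fin n) ℝ, Gen T ∧ T *ᵥ u = v := by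
  rcases eq_or_ne u v with rfl | huv
  · exact ⟨1, Gen_one, by simp⟩
  rcases ne_or_eq (om u v) 0 with h | h
  · exact ⟨_, Gen_tv _ _, move_single h⟩
  · -- find w with om u w ≠ 0 and om v w ≠ 0
    obtain ⟨w, hw1, hw2⟩ : ∃ w, om u w ≠ 0 ∧ om v w ≠ 0 := by
      have ha := (om_rv_self_pos u hu).ne'
      have hb := (om_rv_self_pos v hv).ne'
      rcases ne_or_eq (om v (rv u)) 0 with h1 | h1
      · exact ⟨rv u, ha, h1⟩
      rcases ne_or_eq (om u (rv v)) 0 with h2 | h2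
      · exact ⟨rv v, h2, hb⟩
      · refine ⟨rv u + rv v, ?_, ?_⟩
        · rw [om_add_right, h2]; simpa using ha
        · rw [om_add_right, h1]; simpa using hb
    have hwv : om w v ≠ 0 := by rw [om_skew]; simpa using hw2
    refine ⟨tv (v - w) (1 / om v w) * tv (w - u) (1 / om w u), Gen_mul (Gen_tv _ _) (Gen_tv _ _), ?_⟩
    rw [← Matrix.mulVec_mulVec, move_single hw1, move_single hwv]

/-- A transvection mapping `v₁ ↦ v₂` while fixing `u`, provided `ω u v₁ = ω u v₂` and
`ω v₂ v₁ ≠ 0`. -/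
lemma move_pair_single {u v₁ v₂ : Fin 2 × Fin n → ℝ} (h12 : om v₂ v₁ ≠ 0)
    (h1 : om u v₁ = om u v₂) :
    tv (v₂ - v₁) (1 / om v₂ v₁) *ᵥ v₁ = v₂ ∧ tv (v₂ - v₁) (1 / om v₂ v₁) *ᵥ u = u := by
  constructor
  · apply move_single
    rw [om_skew]; simpa using h12
  · rw [tv_mulVec, om_sub_left]
    have : om v₂ u - om v₁ u = 0 := by
      have h2 := om_skew u v₂; have h3 := om_skew u v₁
      rw [h2, h3, h1]; ring
    rw [this, mul_zero, zero_smul, add_zero]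

/-- Transvections act transitively on pairs with fixed nonzero `ω`-value. -/
lemma move_hyperbolic_pair {u₁ v₁ u₂ v₂ : Fin 2 × Fin n → ℝ} {δ : ℝ} (hδ : δ ≠ 0)
    (h1 : om u₁ v₁ = δ) (h2 : om u₂ v₂ = δ) :
    ∃ T : Matrix (Fin 2 × Fin n) (Fin 2 × Fin n) ℝ, Gen T ∧ T *ᵥ u₁ = u₂ ∧ T *ᵥ v₁ = v₂ := by
  have hu1 : u₁ ≠ 0 := om_ne_zero_left (h1 ▸ hδ)
  have hu2 : u₂ ≠ 0 := om_ne_zero_left (h2 ▸ hδ)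
  obtain ⟨T₀, hT₀, hT₀u⟩ := move_any hu1 hu2
  set w := T₀ *ᵥ v₁ with hw
  have hT₀s := Gen_symplectic hT₀
  have how : om u₂ w = δ := by rw [← hT₀u, hw, symplectic_om hT₀s, h1]
  -- now map w to v₂ fixing u₂
  suffices h : ∃ T : Matrix (Fin 2 × Fin n) (Fin 2 × Fin n) ℝ, Gen T ∧ T *ᵥ u₂ = u₂ ∧ T *ᵥ w = v₂ by
    obtain ⟨T, hT, hTu, hTw⟩ := h
    exact ⟨T * T₀, Gen_mul hT hT₀, by rw [← Matrix.mulVec_mulVec, hT₀u, hTu],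
      by rw [← Matrix.mulVec_mulVec, ← hw, hTw]⟩
  rcases eq_or_ne w v₂ with rfl | hne
  · exact ⟨1, Gen_one, by simp, by simp⟩
  rcases ne_or_eq (om v₂ w) 0 with hvw | hvw
  · obtain ⟨hmove, hfix⟩ := move_pair_single hvw (how.trans h2.symm)
    exact ⟨_, Gen_tv _ _, hfix, hmove⟩
  · -- middle step via v₃ = u₂ + w
    set v₃ := u₂ + w with hv3
    have h3 : om u₂ v₃ = δ := by rw [hv3, om_add_right, om_self, zero_add, how]
    have h13 : om v₃ w ≠ 0 := by
      rw [hv3, om_add_left, om_self, add_zero, how]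
      exact hδ
    have hT1 : tv u₂ (1 / δ) *ᵥ w = v₃ ∧ tv u₂ (1 / δ) *ᵥ u₂ = u₂ := by
      constructor
      · rw [tv_mulVec]
        rw [how, one_div, inv_mul_cancel₀ hδ, one_smul, hv3]
        abel
      · rw [tv_mulVec, om_self, mul_zero, zero_smul, add_zero]
    have h23 : om v₂ v₃ ≠ 0 := by
      rw [hv3, om_add_right, hvw, add_zero]
      have := om_skew u₂ v₂
      intro hz
      rw [hz] at this
      exact hδ (by rw [← h2]; linarith)
    obtain ⟨hmove2, hfix2⟩ := move_pair_single h23 (h3.trans h2.symm)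
    refine ⟨tv (v₂ - v₃) (1 / om v₂ v₃) * tv u₂ (1 / δ), Gen_mul (Gen_tv _ _) (Gen_tv _ _), ?_, ?_⟩
    · rw [← Matrix.mulVec_mulVec, hT1.2, hfix2]
    · rw [← Matrix.mulVec_mulVec, hT1.1, hmove2]


lemma symplectic_mul {A B : Matrix (Fin 2 × Fin n) (Fin 2 × Fin n) ℝ}
    (hA : Aᵀ * Jn n * A = Jn n) (hB : Bᵀ * Jn n * B = Jn n) :
    (A * B)ᵀ * Jn n * (A * B) = Jn n := by
  rw [Matrix.transpose_mul]
  calc Bᵀ * Aᵀ * Jn n * (A * B) = Bᵀ * (Aᵀ * Jn n * A) * B := by noncomm_ring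
    _ = Jn n := by rw [hA, hB]

/-- The block equivalence splitting off the first `2×2` block. -/
def EB (n : ℕ) : (Fin 2 × Fin (n + 1)) ≃ (Fin 2 × Fin 1) ⊕ (Fin 2 × Fin n) :=
  (Equiv.prodCongr (Equiv.refl (Fin 2))
    ((finCongr (Nat.add_comm n 1)).trans finSumFinEquiv.symm)).trans
    (Equiv.prodSumDistrib (Fin 2) (Fin 1) (Fin n))

lemma EB_symm_inl (a : Fin 2) (z : Fin 1) : (EB n).symm (Sum.inl (a, z)) = (a, 0) := by
  rw [Equiv.symm_apply_eq]
  simp only [EB, Equiv.trans_apply, Equiv.prodCongr_apply, Equiv.coe_refl, Prod.map_apply,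
    id_eq]
  rw [show (finCongr (Nat.add_comm n 1) (0 : Fin (n + 1))) = Fin.castAdd n z from
    Fin.ext (by simp [Fin.eq_zero z])]
  simp

lemma EB_symm_inr (a : Fin 2) (j : Fin n) : (EB n).symm (Sum.inr (a, j)) = (a, j.succ) := by
  rw [Equiv.symm_apply_eq]
  simp only [EB, Equiv.trans_apply, Equiv.prodCongr_apply, Equiv.coe_refl, Prod.map_apply,
    id_eq]
  rw [show (finCongr (Nat.add_comm n 1) (Fin.succ j)) = Fin.natAdd 1 j from
    Fin.ext (by simp [Nat.add_comm])]
  simp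

lemma submatrix_Jn :
    (Jn (n + 1)).submatrix (EB n).symm (EB n).symm =
      Matrix.fromBlocks (Jn 1) 0 0 (Jn n) := by
  ext p q
  rcases p with p | p <;> rcases q with q | q <;> rcases p with ⟨a, i⟩ <;> rcases q with ⟨b, j⟩ <;>
    simp only [Matrix.submatrix_apply, EB_symm_inl, EB_symm_inr, Matrix.fromBlocks_apply₁₁,
      Matrix.fromBlocks_apply₁₂, Matrix.fromBlocks_apply₂₁, Matrix.fromBlocks_apply₂₂,
      Jn, Matrix.blockDiagonal_apply, Matrix.zero_apply]
  · simp [Subsingleton.elim i j]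
  · simp [(Fin.succ_ne_zero j).symm]
  · simp [Fin.succ_ne_zero i]
  · simp [Fin.succ_inj]

/-- Extension of a vector by zero on the first block. -/
def extv (v : Fin 2 × Fin n → ℝ) : Fin 2 × Fin (n + 1) → ℝ :=
  Sum.elim (fun _ => 0) v ∘ (EB n)

lemma extv_comp (v : Fin 2 × Fin n → ℝ) :
    extv v ∘ (EB n).symm = Sum.elim (fun _ => 0) v := by
  funext p; simp [extv]

lemma submatrix_vecMulVec (a b : Fin 2 × Fin (n + 1) → ℝ)
    (f g : (Fin 2 × Fin 1) ⊕ (Fin 2 × Fin n) → Fin 2 × Fin (n + 1)) :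
    (Matrix.vecMulVec a b).submatrix f g = Matrix.vecMulVec (a ∘ f) (b ∘ g) := by
  ext i j; simp [Matrix.vecMulVec_apply]

lemma rv_extv (v : Fin 2 × Fin n → ℝ) :
    rv (extv v) ∘ (EB n).symm = Sum.elim (fun _ => 0) (rv v) := by
  have h1 : rv (extv v) ∘ (EB n).symm
      = (extv v ∘ (EB n).symm) ᵥ* ((Jn (n + 1)).submatrix (EB n).symm (EB n).symm) := by
    rw [Matrix.submatrix_vecMul_equiv (Jn (n + 1)) (extv v ∘ (EB n).symm) ((EB n).symm)
      ((EB n).symm)]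
    have : (extv v ∘ (EB n).symm) ∘ ((EB n).symm).symm = extv v := by
      funext p; simp
    rw [this]
    rfl
  rw [h1, extv_comp, submatrix_Jn, Matrix.vecMul_fromBlocks]
  funext p
  rcases p with p | p <;>
    simp [rv, Matrix.vecMul, dotProduct]

lemma submatrix_tv (v : Fin 2 × Fin n → ℝ) (c : ℝ) :
    (tv (extv v) c).submatrix (EB n).symm (EB n).symm
      = Matrix.fromBlocks 1 0 0 (tv v c) := by
  have hvv : (Matrix.vecMulVec (extv v) (rv (extv v))).submatrix (EB n).symm (EB n).symm
      = Matrix.fromBlocks 0 0 0 (Matrix.vecMulVec v (rv v)) := by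
    rw [submatrix_vecMulVec, extv_comp, rv_extv]
    ext p q
    rcases p with p | p <;> rcases q with q | q <;> simp [Matrix.vecMulVec_apply]
  unfold tv tmat
  have : ((1 : Matrix (Fin 2 × Fin (n+1)) (Fin 2 × Fin (n+1)) ℝ)
        + c • Matrix.vecMulVec (extv v) (rv (extv v))).submatrix (EB n).symm (EB n).symm
      = (1 : Matrix (Fin 2 × Fin (n+1)) (Fin 2 × Fin (n+1)) ℝ).submatrix (EB n).symm (EB n).symm
        + c • (Matrix.vecMulVec (extv v) (rv (extv v))).submatrix (EB n).symm (EB n).symm := by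
    ext p q
    simp [Matrix.submatrix_apply, Matrix.one_apply, Equiv.apply_eq_iff_eq]
  rw [this, Matrix.submatrix_one_equiv, hvv]
  rw [show (1 : Matrix ((Fin 2 × Fin 1) ⊕ (Fin 2 × Fin n)) _ ℝ)
      = Matrix.fromBlocks 1 0 0 1 from (Matrix.fromBlocks_one).symm]
  rw [Matrix.fromBlocks_smul, Matrix.fromBlocks_add]
  simp

lemma lift_prod (l : List ((Fin 2 × Fin n → ℝ) × ℝ)) :
    (((l.map fun p => (extv p.1, p.2)).map fun p => tv p.1 p.2).prod).submatrix
        (EB n).symm (EB n).symm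
      = Matrix.fromBlocks 1 0 0 ((l.map fun p => tv p.1 p.2).prod) := by
  induction l with
  | nil =>
    simp only [List.map_nil, List.prod_nil]
    rw [Matrix.submatrix_one_equiv, ← Matrix.fromBlocks_one]
  | cons p l ih =>
    simp only [List.map_cons, List.prod_cons]
    rw [← Matrix.submatrix_mul_equiv _ _ _ ((EB n).symm) _]
    rw [submatrix_tv, ih, Matrix.fromBlocks_multiply]
    simp

theorem gen_of_symplectic : ∀ {n : ℕ} (M : Matrix (Fin 2 × Fin n) (Fin 2 × Fin n) ℝ),
    Mᵀ * Jn n * M = Jn n → Gen M := by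
  intro n
  induction n with
  | zero =>
    intro M _
    have : M = 1 := by
      ext i j
      exact absurd i.2.2 (Nat.not_lt_zero _)
    rw [this]; exact Gen_one
  | succ n ih =>
    intro M hM
    set e : Fin 2 × Fin (n + 1) → ℝ := Pi.single ((0 : Fin 2), (0 : Fin (n + 1))) 1 with he
    set f : Fin 2 × Fin (n + 1) → ℝ := Pi.single ((1 : Fin 2), (0 : Fin (n + 1))) 1 with hf
    have hef : om e f = -1 := by
      rw [om_eq, hf, Matrix.mulVec_single, he]
      rw [single_dotProduct]
      simp [Jn, Matrix.blockDiagonal_apply, J2]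
    have h1 : om (M *ᵥ e) (M *ᵥ f) = -1 := by rw [symplectic_om hM, hef]
    obtain ⟨T, hGT, hTe, hTf⟩ := move_hyperbolic_pair (by norm_num : (-1 : ℝ) ≠ 0) h1 hef
    set N := T * M with hN
    have hNs : Nᵀ * Jn (n + 1) * N = Jn (n + 1) := symplectic_mul (Gen_symplectic hGT) hM
    have hNe : N *ᵥ e = e := by rw [hN, ← Matrix.mulVec_mulVec, hTe]
    have hNf : N *ᵥ f = f := by rw [hN, ← Matrix.mulVec_mulVec, hTf]
    have hcol0 : ∀ i, N i ((0 : Fin 2), (0 : Fin (n + 1))) = e i := by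
      intro i
      rw [he] at hNe
      rw [Matrix.mulVec_single] at hNe
      simpa using congrFun hNe i
    have hcol1 : ∀ i, N i ((1 : Fin 2), (0 : Fin (n + 1))) = f i := by
      intro i
      rw [hf] at hNf
      rw [Matrix.mulVec_single] at hNf
      simpa using congrFun hNf i
    set NB := N.submatrix (EB n).symm (EB n).symm with hNB
    have hA : NB.toBlocks₁₁ = 1 := by
      ext i j
      obtain ⟨a, z⟩ := i; obtain ⟨b, z'⟩ := j
      simp only [Matrix.toBlocks₁₁, hNB, Matrix.submatrix_apply, Matrix.of_apply, EB_symm_inl]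
      rw [Fin.eq_zero z, Fin.eq_zero z']
      fin_cases a <;> fin_cases b
      · exact (hcol0 _).trans (by
          simp [he, Pi.single_apply, Matrix.one_apply, Prod.ext_iff, Fin.ext_iff])
      · exact (hcol1 _).trans (by
          simp [hf, Pi.single_apply, Matrix.one_apply, Prod.ext_iff, Fin.ext_iff])
      · exact (hcol0 _).trans (by
          simp [he, Pi.single_apply, Matrix.one_apply, Prod.ext_iff, Fin.ext_iff])
      · exact (hcol1 _).trans (by
          simp [hf, Pi.single_apply, Matrix.one_apply, Prod.ext_iff, Fin.ext_iff])
    have hC : NB.toBlocks₂₁ = 0 := by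
      ext i j
      obtain ⟨a, jj⟩ := i; obtain ⟨b, z⟩ := j
      simp only [Matrix.toBlocks₂₁, hNB, Matrix.submatrix_apply, Matrix.of_apply, EB_symm_inl,
        EB_symm_inr, Matrix.zero_apply]
      fin_cases b
      · exact (hcol0 _).trans (by
          simp [he, Pi.single_apply, Prod.ext_iff, Fin.succ_ne_zero jj])
      · exact (hcol1 _).trans (by
          simp [hf, Pi.single_apply, Prod.ext_iff, Fin.succ_ne_zero jj])
    set B := NB.toBlocks₁₂ with hBdef
    set D := NB.toBlocks₂₂ with hDdef
    have hNBeq : NB = Matrix.fromBlocks 1 B 0 D := by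
      rw [← Matrix.fromBlocks_toBlocks NB, hA, hC]
    have hNBs : NBᵀ * Matrix.fromBlocks (Jn 1) 0 0 (Jn n) * NB
        = Matrix.fromBlocks (Jn 1) 0 0 (Jn n) := by
      rw [← submatrix_Jn, hNB, Matrix.transpose_submatrix,
        Matrix.submatrix_mul_equiv _ _ _ ((EB n).symm) _,
        Matrix.submatrix_mul_equiv _ _ _ ((EB n).symm) _, hNs]
    rw [hNBeq, Matrix.fromBlocks_transpose, Matrix.fromBlocks_multiply,
      Matrix.fromBlocks_multiply] at hNBs
    have h12 := congrArg Matrix.toBlocks₁₂ hNBs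
    simp only [Matrix.toBlocks_fromBlocks₁₂] at h12
    have hB : B = 0 := by
      have h12' : Jn 1 * B = 0 := by
        have := h12
        simp only [Matrix.transpose_one, Matrix.transpose_zero, Matrix.one_mul,
          Matrix.mul_zero, Matrix.zero_mul, Matrix.mul_one, add_zero, zero_add] at this
        exact this
      have h2 := congrArg (fun X => Jn 1 * X) h12'
      simp only [Matrix.mul_zero, ← Matrix.mul_assoc, Jn_mul_Jn] at h2
      simpa [Matrix.neg_mul] using h2
    have h22 := congrArg Matrix.toBlocks₂₂ hNBs
    simp only [Matrix.toBlocks_fromBlocks₂₂] at h22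
    have hD : Dᵀ * Jn n * D = Jn n := by
      rw [hB] at h22
      simpa using h22
    obtain ⟨l', hl'⟩ := ih D hD
    have h2 := lift_prod l'
    rw [hl'] at h2
    have h3 : NB = Matrix.fromBlocks 1 0 0 D := by rw [hNBeq, hB]
    have h4 := h2.trans h3.symm
    have h5 := congrArg (fun X => X.submatrix (EB n) (EB n)) h4
    simp only [Matrix.submatrix_submatrix, Equiv.symm_comp_self, Matrix.submatrix_id_id,
      hNB] at h5
    obtain ⟨T', hGT', hT'T, _⟩ := Gen_inv hGT
    have hMeq : M = T' * N := by
      rw [hN, ← Matrix.mul_assoc, hT'T, Matrix.one_mul]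
    rw [hMeq]
    exact Gen_mul hGT' ⟨_, h5⟩



/-- Entrywise derivative of a matrix path. -/
def EDeriv (A : ℝ → Matrix (Fin 2 × Fin n) (Fin 2 × Fin n) ℝ)
    (A' : Matrix (Fin 2 × Fin n) (Fin 2 × Fin n) ℝ) (t : ℝ) : Prop :=
  ∀ i j, HasDerivAt (fun s => A s i j) (A' i j) t

/-- Entrywise continuity of a matrix path. -/
def ECont (A : ℝ → Matrix (Fin 2 × Fin n) (Fin 2 × Fin n) ℝ) : Prop :=
  ∀ i j, Continuous fun t => A t i j

lemma EDeriv.mul {A B : ℝ → Matrix (Fin 2 × Fin n) (Fin 2 × Fin n) ℝ}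
    {A' B' : Matrix (Fin 2 × Fin n) (Fin 2 × Fin n) ℝ} {t : ℝ}
    (hA : EDeriv A A' t) (hB : EDeriv B B' t) :
    EDeriv (fun s => A s * B s) (A' * B t + A t * B') t := by
  intro i j
  have h := HasDerivAt.fun_sum (u := Finset.univ)
    (A := fun k s => A s i k * B s k j)
    (A' := fun k => A' i k * B t k j + A t i k * B' k j)
    (fun k _ => (hA i k).mul (hB k j))
  have e1 : (fun s => ∑ k, A s i k * B s k j) = fun s => (A s * B s) i j := by
    funext s; rw [Matrix.mul_apply]
  rw [e1] at h
  refine h.congr_deriv ?_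
  rw [Matrix.add_apply, Matrix.mul_apply, Matrix.mul_apply, ← Finset.sum_add_distrib]

lemma EDeriv.const {t : ℝ} (A : Matrix (Fin 2 × Fin n) (Fin 2 × Fin n) ℝ) :
    EDeriv (fun _ => A) 0 t := fun i j => by
  simpa using hasDerivAt_const t (A i j)

lemma ECont.mul {A B : ℝ → Matrix (Fin 2 × Fin n) (Fin 2 × Fin n) ℝ}
    (hA : ECont A) (hB : ECont B) : ECont fun s => A s * B s := by
  intro i j
  have : (fun s => (A s * B s) i j) = fun s => ∑ k, A s i k * B s k j := by
    funext s; rw [Matrix.mul_apply]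
  rw [this]
  exact continuous_finset_sum _ fun k _ => (hA i k).mul (hB k j)

lemma ECont.const (A : Matrix (Fin 2 × Fin n) (Fin 2 × Fin n) ℝ) : ECont fun _ => A :=
  fun i j => continuous_const

lemma ECont.transpose {A : ℝ → Matrix (Fin 2 × Fin n) (Fin 2 × Fin n) ℝ} (hA : ECont A) :
    ECont fun s => (A s)ᵀ := fun i j => hA j i

/-- The smooth ramp. -/
def sig : ℝ → ℝ := Real.smoothTransition

def sig' : ℝ → ℝ := deriv Real.smoothTransition

lemma sig_hasDeriv (t : ℝ) : HasDerivAt sig (sig' t) t :=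
  (((Real.smoothTransition.contDiff (n := 1)).differentiable (by norm_num)) t).hasDerivAt

lemma sig'_cont : Continuous sig' :=
  (Real.smoothTransition.contDiff (n := 1)).continuous_deriv (by norm_num)

lemma sig_cont : Continuous sig := Real.smoothTransition.continuous

lemma sig_zero : sig 0 = 0 := Real.smoothTransition.zero_of_nonpos le_rfl
lemma sig_one : sig 1 = 1 := Real.smoothTransition.one_of_one_le le_rfl

-- abbreviations for the factors
def Efun (p : (Fin 2 × Fin n → ℝ) × ℝ) (t : ℝ) : Matrix (Fin 2 × Fin n) (Fin 2 × Fin n) ℝ :=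
  tv p.1 (sig t * p.2)

def Einv (p : (Fin 2 × Fin n → ℝ) × ℝ) (t : ℝ) : Matrix (Fin 2 × Fin n) (Fin 2 × Fin n) ℝ :=
  tv p.1 (-(sig t * p.2))

lemma Efun_mul_Einv (p : (Fin 2 × Fin n → ℝ) × ℝ) (t : ℝ) : Efun p t * Einv p t = 1 :=
  tv_mul_tv_neg _ _

lemma Einv_mul_Efun (p : (Fin 2 × Fin n → ℝ) × ℝ) (t : ℝ) : Einv p t * Efun p t = 1 := by
  have := tv_mul_tv_neg p.1 (-(sig t * p.2))
  simpa [Einv, Efun] using this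

lemma Efun_deriv (p : (Fin 2 × Fin n → ℝ) × ℝ) (t : ℝ) :
    EDeriv (Efun p) (tmat p.1 (sig' t * p.2)) t := by
  intro i j
  have h1 : HasDerivAt (fun s => sig s * p.2) (sig' t * p.2) t :=
    (sig_hasDeriv t).mul_const p.2
  have h2 : HasDerivAt (fun s => (1 : Matrix (Fin 2 × Fin n) (Fin 2 × Fin n) ℝ) i j
      + (sig s * p.2) * Matrix.vecMulVec p.1 (rv p.1) i j)
      ((sig' t * p.2) * Matrix.vecMulVec p.1 (rv p.1) i j) t := by
    simpa using (h1.mul_const _).const_add ((1 : Matrix (Fin 2 × Fin n) (Fin 2 × Fin n) ℝ) i j)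
  have e1 : (fun s => Efun p s i j) = fun s =>
      (1 : Matrix (Fin 2 × Fin n) (Fin 2 × Fin n) ℝ) i j
        + (sig s * p.2) * Matrix.vecMulVec p.1 (rv p.1) i j := by
    funext s; simp [Efun, tv, tmat, Matrix.add_apply, Matrix.smul_apply, smul_eq_mul]
  have e2 : tmat p.1 (sig' t * p.2) i j
      = (sig' t * p.2) * Matrix.vecMulVec p.1 (rv p.1) i j := by
    simp [tmat, Matrix.smul_apply, smul_eq_mul]
  rw [e1, e2]
  exact h2

lemma Efun_cont (p : (Fin 2 × Fin n → ℝ) × ℝ) : ECont (Efun p) := by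
  intro i j
  have : (fun t => Efun p t i j) = fun t =>
      (1 : Matrix (Fin 2 × Fin n) (Fin 2 × Fin n) ℝ) i j
        + (sig t * p.2) * Matrix.vecMulVec p.1 (rv p.1) i j := by
    funext t; simp [Efun, tv, tmat, Matrix.add_apply, Matrix.smul_apply, smul_eq_mul]
  rw [this]
  exact continuous_const.add ((sig_cont.mul continuous_const).mul continuous_const)

lemma Einv_cont (p : (Fin 2 × Fin n → ℝ) × ℝ) : ECont (Einv p) := by
  intro i j
  have : (fun t => Einv p t i j) = fun t =>
      (1 : Matrix (Fin 2 × Fin n) (Fin 2 × Fin n) ℝ) i j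
        + (-(sig t * p.2)) * Matrix.vecMulVec p.1 (rv p.1) i j := by
    funext t; simp [Einv, tv, tmat, Matrix.add_apply, Matrix.smul_apply, smul_eq_mul]
  rw [this]
  exact continuous_const.add (((sig_cont.mul continuous_const).neg).mul continuous_const)

/-- The product path. -/
def PP : List ((Fin 2 × Fin n → ℝ) × ℝ) → ℝ → Matrix (Fin 2 × Fin n) (Fin 2 × Fin n) ℝ
  | [], _ => 1
  | p :: l, t => Efun p t * PP l t

/-- Its inverse. -/
def PPinv : List ((Fin 2 × Fin n → ℝ) × ℝ) → ℝ → Matrix (Fin 2 × Fin n) (Fin 2 × Fin n) ℝ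
  | [], _ => 1
  | p :: l, t => PPinv l t * Einv p t

/-- Its derivative. -/
def DD : List ((Fin 2 × Fin n → ℝ) × ℝ) → ℝ → Matrix (Fin 2 × Fin n) (Fin 2 × Fin n) ℝ
  | [], _ => 0
  | p :: l, t => tmat p.1 (sig' t * p.2) * PP l t + Efun p t * DD l t

/-- The associated symmetric family. -/
def QQ : (ℝ → Matrix (Fin 2 × Fin n) (Fin 2 × Fin n) ℝ) →
    List ((Fin 2 × Fin n → ℝ) × ℝ) → ℝ → Matrix (Fin 2 × Fin n) (Fin 2 × Fin n) ℝ
  | _, [], _ => 0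
  | Ci, p :: l, t => (Ci t)ᵀ * smat p.1 (sig' t * p.2) * Ci t
      + QQ (fun s => Einv p s * Ci s) l t

/-- The quadratic-form bound. -/
def bb : (ℝ → Matrix (Fin 2 × Fin n) (Fin 2 × Fin n) ℝ) →
    List ((Fin 2 × Fin n → ℝ) × ℝ) → ℝ → ℝ
  | _, [], _ => 0
  | Ci, p :: l, t => |sig' t * p.2| * ((rv p.1 ᵥ* Ci t) ⬝ᵥ (rv p.1 ᵥ* Ci t))
      + bb (fun s => Einv p s * Ci s) l t

lemma PP_mul_PPinv (l : List ((Fin 2 × Fin n → ℝ) × ℝ)) (t : ℝ) :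
    PP l t * PPinv l t = 1 ∧ PPinv l t * PP l t = 1 := by
  induction l with
  | nil => simp [PP, PPinv]
  | cons p l ih =>
    constructor
    · show Efun p t * PP l t * (PPinv l t * Einv p t) = 1
      calc Efun p t * PP l t * (PPinv l t * Einv p t)
          = Efun p t * (PP l t * PPinv l t) * Einv p t := by noncomm_ring
        _ = 1 := by rw [ih.1, mul_one, Efun_mul_Einv]
    · show PPinv l t * Einv p t * (Efun p t * PP l t) = 1
      calc PPinv l t * Einv p t * (Efun p t * PP l t)
          = PPinv l t * (Einv p t * Efun p t) * PP l t := by noncomm_ring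
        _ = 1 := by rw [Einv_mul_Efun, mul_one, ih.2]

lemma PP_symplectic (l : List ((Fin 2 × Fin n → ℝ) × ℝ)) (t : ℝ) :
    (PP l t)ᵀ * Jn n * PP l t = Jn n := by
  induction l with
  | nil => simp [PP]
  | cons p l ih => exact symplectic_mul (tv_symplectic _ _) ih

lemma PP_deriv (l : List ((Fin 2 × Fin n → ℝ) × ℝ)) (t : ℝ) :
    EDeriv (PP l) (DD l t) t := by
  induction l with
  | nil => intro i j; simpa [PP, DD] using hasDerivAt_const t ((1:Matrix (Fin 2 × Fin n) (Fin 2 × Fin n) ℝ) i j)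
  | cons p l ih =>
    have h := (Efun_deriv p t).mul ih
    exact h

lemma PP_cont (l : List ((Fin 2 × Fin n → ℝ) × ℝ)) : ECont (PP l) := by
  induction l with
  | nil => exact ECont.const 1
  | cons p l ih => exact (Efun_cont p).mul ih

lemma PPinv_cont (l : List ((Fin 2 × Fin n → ℝ) × ℝ)) : ECont (PPinv l) := by
  induction l with
  | nil => exact ECont.const 1
  | cons p l ih => exact ih.mul (Einv_cont p)

lemma PP_zero (l : List ((Fin 2 × Fin n → ℝ) × ℝ)) : PP l 0 = 1 := by
  induction l with
  | nil => rfl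
  | cons p l ih =>
    show Efun p 0 * PP l 0 = 1
    rw [ih, mul_one, Efun, sig_zero]
    simp [tv, tmat]

lemma PP_one (l : List ((Fin 2 × Fin n → ℝ) × ℝ)) :
    PP l 1 = (l.map fun p => tv p.1 p.2).prod := by
  induction l with
  | nil => rfl
  | cons p l ih =>
    show Efun p 1 * PP l 1 = _
    rw [ih, Efun, sig_one, one_mul]
    simp

lemma QQ_symm (Ci : ℝ → Matrix (Fin 2 × Fin n) (Fin 2 × Fin n) ℝ)
    (l : List ((Fin 2 × Fin n → ℝ) × ℝ)) (t : ℝ) : (QQ Ci l t)ᵀ = QQ Ci l t := by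
  induction l generalizing Ci with
  | nil => simp [QQ]
  | cons p l ih =>
    show ((Ci t)ᵀ * smat p.1 (sig' t * p.2) * Ci t + QQ (fun s => Einv p s * Ci s) l t)ᵀ = _
    rw [Matrix.transpose_add, Matrix.transpose_mul, Matrix.transpose_mul, Matrix.transpose_transpose,
      smat_transpose, ih]
    rw [← Matrix.mul_assoc]
    rfl

lemma QQ_cont {Ci : ℝ → Matrix (Fin 2 × Fin n) (Fin 2 × Fin n) ℝ} (hCi : ECont Ci)
    (l : List ((Fin 2 × Fin n → ℝ) × ℝ)) : ECont (fun t => QQ Ci l t) := by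
  induction l generalizing Ci with
  | nil => exact ECont.const 0
  | cons p l ih =>
    have h1 : ECont (fun t => (Ci t)ᵀ * smat p.1 (sig' t * p.2) * Ci t) := by
      refine ECont.mul (ECont.mul hCi.transpose ?_) hCi
      intro i j
      have : (fun t => smat p.1 (sig' t * p.2) i j)
          = fun t => (sig' t * p.2) * Matrix.vecMulVec (rv p.1) (rv p.1) i j := by
        funext t; simp [smat, Matrix.smul_apply, smul_eq_mul]
      rw [this]
      exact ((sig'_cont.mul continuous_const).mul continuous_const)
    have h2 := ih (Ci := fun s => Einv p s * Ci s) ((Einv_cont p).mul hCi)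
    intro i j
    exact (h1 i j).add (h2 i j)

lemma bb_cont {Ci : ℝ → Matrix (Fin 2 × Fin n) (Fin 2 × Fin n) ℝ} (hCi : ECont Ci)
    (l : List ((Fin 2 × Fin n → ℝ) × ℝ)) : Continuous (fun t => bb Ci l t) := by
  induction l generalizing Ci with
  | nil => exact continuous_const
  | cons p l ih =>
    have hvm : ∀ j, Continuous fun t => (rv p.1 ᵥ* Ci t) j := by
      intro j
      have : (fun t => (rv p.1 ᵥ* Ci t) j) = fun t => ∑ k, rv p.1 k * Ci t k j := by
        funext t; rfl
      rw [this]
      exact continuous_finset_sum _ fun k _ => continuous_const.mul (hCi k j)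
    have h1 : Continuous fun t => (rv p.1 ᵥ* Ci t) ⬝ᵥ (rv p.1 ᵥ* Ci t) := by
      have : (fun t => (rv p.1 ᵥ* Ci t) ⬝ᵥ (rv p.1 ᵥ* Ci t))
          = fun t => ∑ k, (rv p.1 ᵥ* Ci t) k * (rv p.1 ᵥ* Ci t) k := by
        funext t; rfl
      rw [this]
      exact continuous_finset_sum _ fun k _ => (hvm k).mul (hvm k)
    exact (((sig'_cont.mul continuous_const).abs).mul h1).add
      (ih ((Einv_cont p).mul hCi))

lemma J_conj {C Ci : Matrix (Fin 2 × Fin n) (Fin 2 × Fin n) ℝ}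
    (hs : Cᵀ * Jn n * C = Jn n) (hi : C * Ci = 1) (hi' : Ci * C = 1) :
    Jn n * Ciᵀ = C * Jn n := by
  have h1 : Ciᵀ * Jn n = Jn n * C := by
    calc Ciᵀ * Jn n = Ciᵀ * (Cᵀ * Jn n * C) := by rw [hs]
      _ = (C * Ci)ᵀ * Jn n * C := by rw [Matrix.transpose_mul]; noncomm_ring
      _ = Jn n * C := by rw [hi, Matrix.transpose_one, Matrix.one_mul]
  have h2 := congrArg (fun X => X * Jn n) h1
  rw [Matrix.mul_assoc, Jn_mul_Jn, mul_neg_one] at h2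
  have h3 : Ciᵀ = -(Jn n * C * Jn n) := by rw [← h2, neg_neg]
  rw [h3, mul_neg,
    show Jn n * (Jn n * C * Jn n) = Jn n * Jn n * (C * Jn n) from by noncomm_ring,
    Jn_mul_Jn, neg_one_mul, neg_neg]

lemma DD_eq (l : List ((Fin 2 × Fin n → ℝ) × ℝ)) (t : ℝ) :
    ∀ (C : Matrix (Fin 2 × Fin n) (Fin 2 × Fin n) ℝ)
      (Ci : ℝ → Matrix (Fin 2 × Fin n) (Fin 2 × Fin n) ℝ),
    Cᵀ * Jn n * C = Jn n → C * Ci t = 1 → Ci t * C = 1 →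
    C * DD l t = Jn n * QQ Ci l t * (C * PP l t) := by
  induction l with
  | nil => intro C Ci _ _ _; simp [DD, QQ, PP]
  | cons p l ih =>
    intro C Ci hs hi hi'
    have hE := tv_symplectic p.1 (sig t * p.2)
    have hs' : (C * Efun p t)ᵀ * Jn n * (C * Efun p t) = Jn n := symplectic_mul hs hE
    have hi2 : (C * Efun p t) * (Einv p t * Ci t) = 1 := by
      calc C * Efun p t * (Einv p t * Ci t) = C * (Efun p t * Einv p t) * Ci t := by noncomm_ring
        _ = 1 := by rw [Efun_mul_Einv, Matrix.mul_one, hi]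
    have hi2' : (Einv p t * Ci t) * (C * Efun p t) = 1 := by
      calc Einv p t * Ci t * (C * Efun p t) = Einv p t * (Ci t * C) * Efun p t := by noncomm_ring
        _ = 1 := by rw [hi', Matrix.mul_one, Einv_mul_Efun]
    have IH := ih (C * Efun p t) (fun s => Einv p s * Ci s) hs' hi2 hi2'
    have hJC : Jn n * (Ci t)ᵀ = C * Jn n := J_conj hs hi hi'
    have hSE : smat p.1 (sig' t * p.2) * Efun p t = smat p.1 (sig' t * p.2) := by
      show smat _ _ * (1 + tmat _ _) = _
      rw [Matrix.mul_add, Matrix.mul_one, smat_mul_tmat, add_zero]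
    have hhead : C * (tmat p.1 (sig' t * p.2) * PP l t)
        = Jn n * ((Ci t)ᵀ * smat p.1 (sig' t * p.2) * Ci t) * (C * (Efun p t * PP l t)) := by
      symm
      have e1 : Jn n * ((Ci t)ᵀ * smat p.1 (sig' t * p.2) * Ci t) * (C * (Efun p t * PP l t))
          = (Jn n * (Ci t)ᵀ) * smat p.1 (sig' t * p.2)
            * ((Ci t * C) * (Efun p t * PP l t)) := by noncomm_ring
      rw [e1, hJC, hi', Matrix.one_mul]
      have e2 : C * Jn n * smat p.1 (sig' t * p.2) * (Efun p t * PP l t)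
          = C * (Jn n * (smat p.1 (sig' t * p.2) * Efun p t) * PP l t) := by noncomm_ring
      rw [e2, hSE, Jn_mul_smat]
    have h2nd : C * (Efun p t * DD l t)
        = Jn n * QQ (fun s => Einv p s * Ci s) l t * (C * (Efun p t * PP l t)) := by
      calc C * (Efun p t * DD l t) = (C * Efun p t) * DD l t := by rw [Matrix.mul_assoc]
        _ = Jn n * QQ (fun s => Einv p s * Ci s) l t * ((C * Efun p t) * PP l t) := IH
        _ = Jn n * QQ (fun s => Einv p s * Ci s) l t * (C * (Efun p t * PP l t)) := by
            rw [Matrix.mul_assoc C (Efun p t) (PP l t)]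
    show C * (tmat p.1 (sig' t * p.2) * PP l t + Efun p t * DD l t)
        = Jn n * ((Ci t)ᵀ * smat p.1 (sig' t * p.2) * Ci t
            + QQ (fun s => Einv p s * Ci s) l t) * (C * (Efun p t * PP l t))
    rw [Matrix.mul_add, Matrix.mul_add, Matrix.add_mul, hhead, h2nd]

lemma dot_self_nonneg (y : Fin 2 × Fin n → ℝ) : 0 ≤ y ⬝ᵥ y :=
  Finset.sum_nonneg fun i _ => mul_self_nonneg (y i)

lemma dot_self_pos {y : Fin 2 × Fin n → ℝ} (hy : y ≠ 0) : 0 < y ⬝ᵥ y := by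
  obtain ⟨i, hi⟩ := Function.ne_iff.mp hy
  exact Finset.sum_pos' (fun j _ => mul_self_nonneg _)
    ⟨i, Finset.mem_univ i, mul_self_pos.mpr (by simpa using hi)⟩

lemma cauchy_schwarz (a y : Fin 2 × Fin n → ℝ) : (a ⬝ᵥ y) ^ 2 ≤ (a ⬝ᵥ a) * (y ⬝ᵥ y) := by
  have h := Finset.sum_mul_sq_le_sq_mul_sq Finset.univ a y
  calc (a ⬝ᵥ y) ^ 2 = (∑ i, a i * y i) ^ 2 := rfl
    _ ≤ (∑ i, a i ^ 2) * ∑ i, y i ^ 2 := h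
    _ = (a ⬝ᵥ a) * (y ⬝ᵥ y) := by
        simp [dotProduct, pow_two]

lemma QQ_quadform (l : List ((Fin 2 × Fin n → ℝ) × ℝ)) (t : ℝ) :
    ∀ (Ci : ℝ → Matrix (Fin 2 × Fin n) (Fin 2 × Fin n) ℝ) (y : Fin 2 × Fin n → ℝ),
    |y ⬝ᵥ (QQ Ci l t *ᵥ y)| ≤ bb Ci l t * (y ⬝ᵥ y) := by
  induction l with
  | nil => intro Ci y; simp [QQ, bb]
  | cons p l ih =>
    intro Ci y
    have hsplit : y ⬝ᵥ (QQ Ci (p :: l) t *ᵥ y)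
        = y ⬝ᵥ (((Ci t)ᵀ * smat p.1 (sig' t * p.2) * Ci t) *ᵥ y)
          + y ⬝ᵥ (QQ (fun s => Einv p s * Ci s) l t *ᵥ y) := by
      show y ⬝ᵥ ((((Ci t)ᵀ * smat p.1 (sig' t * p.2) * Ci t)
          + QQ (fun s => Einv p s * Ci s) l t) *ᵥ y) = _
      rw [Matrix.add_mulVec, dotProduct_add]
    have hhead : y ⬝ᵥ (((Ci t)ᵀ * smat p.1 (sig' t * p.2) * Ci t) *ᵥ y)
        = (sig' t * p.2) * ((rv p.1 ᵥ* Ci t) ⬝ᵥ y) ^ 2 := by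
      rw [← Matrix.mulVec_mulVec, ← Matrix.mulVec_mulVec]
      rw [show y ⬝ᵥ ((Ci t)ᵀ *ᵥ (smat p.1 (sig' t * p.2) *ᵥ (Ci t *ᵥ y)))
          = (y ᵥ* (Ci t)ᵀ) ⬝ᵥ (smat p.1 (sig' t * p.2) *ᵥ (Ci t *ᵥ y)) from
        Matrix.dotProduct_mulVec _ _ _]
      rw [Matrix.vecMul_transpose]
      set z := Ci t *ᵥ y with hz
      rw [smat, Matrix.smul_mulVec, vecMulVec_mulVec]
      rw [dotProduct_smul, smul_eq_mul, dotProduct_smul, smul_eq_mul]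
      rw [dotProduct_comm z (rv p.1)]
      rw [show rv p.1 ⬝ᵥ z = (rv p.1 ᵥ* Ci t) ⬝ᵥ y from by rw [hz, Matrix.dotProduct_mulVec]]
      ring
    have htail := ih (fun s => Einv p s * Ci s) y
    calc |y ⬝ᵥ (QQ Ci (p :: l) t *ᵥ y)|
        ≤ |y ⬝ᵥ (((Ci t)ᵀ * smat p.1 (sig' t * p.2) * Ci t) *ᵥ y)|
          + |y ⬝ᵥ (QQ (fun s => Einv p s * Ci s) l t *ᵥ y)| := by
          rw [hsplit]; exact abs_add_le _ _
      _ ≤ |sig' t * p.2| * ((rv p.1 ᵥ* Ci t) ⬝ᵥ (rv p.1 ᵥ* Ci t)) * (y ⬝ᵥ y)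
          + bb (fun s => Einv p s * Ci s) l t * (y ⬝ᵥ y) := by
          refine add_le_add ?_ htail
          rw [hhead, abs_mul]
          rw [mul_assoc]
          refine mul_le_mul_of_nonneg_left ?_ (abs_nonneg _)
          rw [abs_of_nonneg (sq_nonneg _)]
          exact cauchy_schwarz _ _
      _ = bb Ci (p :: l) t * (y ⬝ᵥ y) := by
          show _ = (|sig' t * p.2| * ((rv p.1 ᵥ* Ci t) ⬝ᵥ (rv p.1 ᵥ* Ci t))
            + bb (fun s => Einv p s * Ci s) l t) * (y ⬝ᵥ y)
          ring

open Real in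
/-- The rotation `exp(2πk t J)`, written explicitly. -/
def Rot (k : ℕ) (t : ℝ) : Matrix (Fin 2 × Fin n) (Fin 2 × Fin n) ℝ :=
  Real.cos (2 * π * k * t) • 1 + Real.sin (2 * π * k * t) • Jn n

open Real

lemma Rot_zero (k : ℕ) : Rot (n := n) k 0 = 1 := by
  simp [Rot]

lemma Rot_one (k : ℕ) : Rot (n := n) k 1 = 1 := by
  have hc : Real.cos (2 * π * (k : ℝ)) = 1 := by
    rw [show 2 * π * (k : ℝ) = (k : ℝ) * (2 * π) from by ring]
    exact Real.cos_nat_mul_two_pi k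
  have hs : Real.sin (2 * π * (k : ℝ)) = 0 := by
    have := Real.sin_int_mul_pi (2 * k : ℤ)
    push_cast at this
    rw [show 2 * π * (k : ℝ) = 2 * (k : ℝ) * π from by ring]
    exact this
  simp [Rot, hc, hs]

lemma Rot_transpose (k : ℕ) (t : ℝ) :
    (Rot (n := n) k t)ᵀ = Real.cos (2 * π * k * t) • 1 - Real.sin (2 * π * k * t) • Jn n := by
  rw [Rot, Matrix.transpose_add, Matrix.transpose_smul, Matrix.transpose_smul,
    Matrix.transpose_one, Jn_transpose, smul_neg]
  abel

lemma Rot_mul_RotT (k : ℕ) (t : ℝ) : Rot (n := n) k t * (Rot k t)ᵀ = 1 := by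
  rw [Rot_transpose, Rot]
  set a := Real.cos (2 * π * k * t) with ha
  set b := Real.sin (2 * π * k * t) with hb
  have hab : a * a + b * b = 1 := by
    have := Real.sin_sq_add_cos_sq (2 * π * k * t)
    rw [ha, hb]; nlinarith [this]
  have expand : (a • (1 : Matrix (Fin 2 × Fin n) (Fin 2 × Fin n) ℝ) + b • Jn n)
        * (a • 1 - b • Jn n)
      = (a * a) • (1 : Matrix (Fin 2 × Fin n) (Fin 2 × Fin n) ℝ) - (b * a) • Jn n
        + ((a * b) • Jn n - (b * b) • (Jn n * Jn n)) := by
    rw [Matrix.add_mul, Matrix.mul_sub, Matrix.mul_sub]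
    simp only [Matrix.smul_mul, Matrix.mul_smul, Matrix.one_mul, Matrix.mul_one, smul_smul]
  rw [expand, Jn_mul_Jn]
  rw [show (a * a) • (1 : Matrix (Fin 2 × Fin n) (Fin 2 × Fin n) ℝ) - (b * a) • Jn n
        + ((a * b) • Jn n - (b * b) • (-1 : Matrix (Fin 2 × Fin n) (Fin 2 × Fin n) ℝ))
      = (a * a + b * b) • (1 : Matrix (Fin 2 × Fin n) (Fin 2 × Fin n) ℝ)
        + (a * b - b * a) • Jn n from by module]
  rw [hab, show a * b - b * a = 0 from by ring]
  simp

lemma RotT_mul_Rot (k : ℕ) (t : ℝ) : (Rot (n := n) k t)ᵀ * Rot k t = 1 := by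
  rw [mul_eq_one_comm]
  exact Rot_mul_RotT k t

lemma J_mul_Rot (k : ℕ) (t : ℝ) : Jn n * Rot k t = Rot k t * Jn n := by
  rw [Rot, Matrix.mul_add, Matrix.add_mul]
  simp only [Matrix.mul_smul, Matrix.smul_mul, Matrix.one_mul, Matrix.mul_one]

lemma Rot_symplectic (k : ℕ) (t : ℝ) : (Rot (n := n) k t)ᵀ * Jn n * Rot k t = Jn n := by
  rw [Matrix.mul_assoc, J_mul_Rot, ← Matrix.mul_assoc, RotT_mul_Rot, Matrix.one_mul]

lemma Rot_deriv (k : ℕ) (t : ℝ) :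
    EDeriv (Rot (n := n) k) ((2 * π * k) • (Jn n * Rot k t)) t := by
  intro i j
  have hθ : HasDerivAt (fun s : ℝ => 2 * π * k * s) (2 * π * k) t := by
    simpa using (hasDerivAt_id t).const_mul (2 * π * (k:ℝ))
  have hc : HasDerivAt (fun s => Real.cos (2 * π * k * s))
      (-Real.sin (2 * π * k * t) * (2 * π * k)) t := (Real.hasDerivAt_cos _).comp t hθ
  have hs : HasDerivAt (fun s => Real.sin (2 * π * k * s))
      (Real.cos (2 * π * k * t) * (2 * π * k)) t := (Real.hasDerivAt_sin _).comp t hθ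
  have h : HasDerivAt (fun s => Real.cos (2 * π * k * s) * (1 : Matrix (Fin 2 × Fin n) (Fin 2 × Fin n) ℝ) i j
      + Real.sin (2 * π * k * s) * Jn n i j)
      (-Real.sin (2 * π * k * t) * (2 * π * k) * (1 : Matrix (Fin 2 × Fin n) (Fin 2 × Fin n) ℝ) i j
        + Real.cos (2 * π * k * t) * (2 * π * k) * Jn n i j) t :=
    (hc.mul_const _).add (hs.mul_const _)
  have e1 : (fun s => Rot (n := n) k s i j) = fun s =>
      Real.cos (2 * π * k * s) * (1 : Matrix (Fin 2 × Fin n) (Fin 2 × Fin n) ℝ) i j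
        + Real.sin (2 * π * k * s) * Jn n i j := by
    funext s; simp [Rot, Matrix.add_apply, Matrix.smul_apply, smul_eq_mul]
  have e2 : ((2 * π * k) • (Jn n * Rot (n := n) k t)) i j
      = -Real.sin (2 * π * k * t) * (2 * π * k) * (1 : Matrix (Fin 2 × Fin n) (Fin 2 × Fin n) ℝ) i j
        + Real.cos (2 * π * k * t) * (2 * π * k) * Jn n i j := by
    rw [show Jn n * Rot (n := n) k t
        = Real.cos (2 * π * k * t) • Jn n - Real.sin (2 * π * k * t) • (1 : Matrix (Fin 2 × Fin n) (Fin 2 × Fin n) ℝ) from ?_]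
    · simp only [Matrix.smul_apply, Matrix.sub_apply, Matrix.smul_apply, smul_eq_mul]
      ring
    · rw [Rot, Matrix.mul_add, Matrix.mul_smul, Matrix.mul_smul, Matrix.mul_one, Jn_mul_Jn]
      rw [smul_neg]
      abel
  rw [e1, e2]
  exact h

lemma Rot_cont (k : ℕ) : ECont (Rot (n := n) k) := by
  intro i j
  have : (fun t => Rot (n := n) k t i j) = fun t =>
      Real.cos (2 * π * k * t) * (1 : Matrix (Fin 2 × Fin n) (Fin 2 × Fin n) ℝ) i j
        + Real.sin (2 * π * k * t) * Jn n i j := by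
    funext s; simp [Rot, Matrix.add_apply, Matrix.smul_apply, smul_eq_mul]
  rw [this]
  have hθ : Continuous fun s : ℝ => 2 * π * k * s := by continuity
  exact ((Real.continuous_cos.comp hθ).mul continuous_const).add
    ((Real.continuous_sin.comp hθ).mul continuous_const)



lemma mu_deriv (l : List ((Fin 2 × Fin n → ℝ) × ℝ)) (k : ℕ)
    (M₀ : Matrix (Fin 2 × Fin n) (Fin 2 × Fin n) ℝ) (t : ℝ) :
    EDeriv (fun s => Rot k s * (PP l s * M₀))
      (Jn n * ((2 * π * k) • (1 : Matrix (Fin 2 × Fin n) (Fin 2 × Fin n) ℝ)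
          + Rot k t * QQ (fun _ => 1) l t * (Rot k t)ᵀ)
        * (Rot k t * (PP l t * M₀))) t := by
  have hF : EDeriv (fun s => PP l s * M₀) (DD l t * M₀) t := by
    have h := (PP_deriv l t).mul (EDeriv.const (t := t) M₀)
    simpa using h
  have hμ := (Rot_deriv k t).mul hF
  have hDD : DD l t = Jn n * QQ (fun _ => 1) l t * PP l t := by
    have h := DD_eq l t 1 (fun _ => 1) (by simp) (by simp) (by simp)
    simpa using h
  have hRR : ∀ X : Matrix (Fin 2 × Fin n) (Fin 2 × Fin n) ℝ,
      (Rot k t)ᵀ * (Rot k t * X) = X := fun X => by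
    rw [← Matrix.mul_assoc, RotT_mul_Rot, Matrix.one_mul]
  have hJR : ∀ X : Matrix (Fin 2 × Fin n) (Fin 2 × Fin n) ℝ,
      Rot k t * (Jn n * X) = Jn n * (Rot k t * X) := fun X => by
    rw [← Matrix.mul_assoc, ← J_mul_Rot, Matrix.mul_assoc]
  have key : (2 * π * k) • (Jn n * Rot k t) * (PP l t * M₀) + Rot k t * (DD l t * M₀)
      = Jn n * ((2 * π * k) • (1 : Matrix (Fin 2 × Fin n) (Fin 2 × Fin n) ℝ)
          + Rot k t * QQ (fun _ => 1) l t * (Rot k t)ᵀ)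
        * (Rot k t * (PP l t * M₀)) := by
    rw [hDD]
    simp only [Matrix.mul_add, Matrix.add_mul, Matrix.mul_smul, Matrix.smul_mul,
      Matrix.mul_one, Matrix.one_mul, Matrix.mul_assoc]
    rw [hRR, hJR]
  rw [key] at hμ
  exact hμ

theorem main {n : ℕ}
    (M₀ M₁ : Matrix (Fin 2 × Fin n) (Fin 2 × Fin n) ℝ)
    (h₀ : M₀ᵀ * Jn n * M₀ = Jn n) (h₁ : M₁ᵀ * Jn n * M₁ = Jn n) :
    ∃ μ P : ℝ → Matrix (Fin 2 × Fin n) (Fin 2 × Fin n) ℝ,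
      μ 0 = M₀ ∧ μ 1 = M₁ ∧
      (∀ t ∈ Icc (0:ℝ) 1, (μ t)ᵀ * Jn n * μ t = Jn n) ∧
      (∀ i j, ContinuousOn (fun t => P t i j) (Icc (0:ℝ) 1)) ∧
      ∀ t ∈ Icc (0:ℝ) 1, (P t)ᵀ = P t ∧ (P t).PosDef ∧
        ∀ i j, HasDerivAt (fun s => μ s i j) ((Jn n * P t * μ t) i j) t := by
  classical
  -- the inverse of M₀
  set L : Matrix (Fin 2 × Fin n) (Fin 2 × Fin n) ℝ := -(Jn n * M₀ᵀ * Jn n) with hL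
  have hLM : L * M₀ = 1 := by
    rw [show L * M₀ = -(Jn n * (M₀ᵀ * Jn n * M₀)) from by rw [hL]; noncomm_ring, h₀,
      Jn_mul_Jn]
    simp
  have hML : M₀ * L = 1 := mul_eq_one_comm.mp hLM
  have hLs : Lᵀ * Jn n * L = Jn n := by
    calc Lᵀ * Jn n * L = Lᵀ * (M₀ᵀ * Jn n * M₀) * L := by rw [h₀]
      _ = (M₀ * L)ᵀ * Jn n * (M₀ * L) := by rw [Matrix.transpose_mul]; noncomm_ring
      _ = Jn n := by rw [hML, Matrix.transpose_one, Matrix.one_mul, Matrix.mul_one]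
  have hAs : (M₁ * L)ᵀ * Jn n * (M₁ * L) = Jn n := symplectic_mul h₁ hLs
  obtain ⟨l, hl⟩ := gen_of_symplectic (M₁ * L) hAs
  -- choose k
  have hbbcont : Continuous (fun t => bb (fun _ => (1 : Matrix (Fin 2 × Fin n) (Fin 2 × Fin n) ℝ)) l t) :=
    bb_cont (ECont.const 1) l
  obtain ⟨Cb, hCb⟩ := (isCompact_Icc (a := (0:ℝ)) (b := 1)).exists_bound_of_continuousOn
    hbbcont.continuousOn
  have hπ : (0:ℝ) < 2 * π := by positivity
  obtain ⟨k, hk⟩ := exists_nat_gt (Cb / (2 * π))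
  have hkb : ∀ t ∈ Icc (0:ℝ) 1,
      bb (fun _ => (1 : Matrix (Fin 2 × Fin n) (Fin 2 × Fin n) ℝ)) l t < 2 * π * k := by
    intro t ht
    have hb1 : bb (fun _ => (1 : Matrix (Fin 2 × Fin n) (Fin 2 × Fin n) ℝ)) l t ≤ Cb :=
      le_trans (le_abs_self _) (hCb t ht)
    have hb2 : Cb < 2 * π * k := by
      rw [div_lt_iff₀ hπ] at hk
      linarith
    linarith
  refine ⟨fun t => Rot k t * (PP l t * M₀),
    fun t => (2 * π * k) • (1 : Matrix (Fin 2 × Fin n) (Fin 2 × Fin n) ℝ)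
      + Rot k t * QQ (fun _ => 1) l t * (Rot k t)ᵀ, ?_, ?_, ?_, ?_, ?_⟩
  · show Rot k 0 * (PP l 0 * M₀) = M₀
    rw [Rot_zero, PP_zero, Matrix.one_mul, Matrix.one_mul]
  · show Rot k 1 * (PP l 1 * M₀) = M₁
    rw [Rot_one, PP_one, hl, Matrix.one_mul, Matrix.mul_assoc, hLM, Matrix.mul_one]
  · intro t _
    exact symplectic_mul (Rot_symplectic k t) (symplectic_mul (PP_symplectic l t) h₀)
  · intro i j
    apply Continuous.continuousOn
    have hQc : ECont (fun t => QQ (fun _ => (1 : Matrix (Fin 2 × Fin n) (Fin 2 × Fin n) ℝ)) l t) :=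
      QQ_cont (ECont.const 1) l
    have h1 : ECont (fun t => Rot (n := n) k t
        * QQ (fun _ => (1 : Matrix (Fin 2 × Fin n) (Fin 2 × Fin n) ℝ)) l t * (Rot k t)ᵀ) :=
      ((Rot_cont k).mul hQc).mul (Rot_cont k).transpose
    simp only [Matrix.add_apply]
    exact continuous_const.add (h1 i j)
  · intro t ht
    have hsymmQ := QQ_symm (fun _ => (1 : Matrix (Fin 2 × Fin n) (Fin 2 × Fin n) ℝ)) l t
    have htr : ((2 * π * k) • (1 : Matrix (Fin 2 × Fin n) (Fin 2 × Fin n) ℝ)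
        + Rot k t * QQ (fun _ => 1) l t * (Rot k t)ᵀ)ᵀ
        = (2 * π * k) • (1 : Matrix (Fin 2 × Fin n) (Fin 2 × Fin n) ℝ)
          + Rot k t * QQ (fun _ => 1) l t * (Rot k t)ᵀ := by
      rw [Matrix.transpose_add, Matrix.transpose_smul, Matrix.transpose_one,
        Matrix.transpose_mul, Matrix.transpose_mul, Matrix.transpose_transpose, hsymmQ,
        ← Matrix.mul_assoc]
    refine ⟨htr, ?_, ?_⟩
    · -- positive definiteness
      rw [Matrix.posDef_iff_dotProduct_mulVec]
      constructor
      · show _ = _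
        have : ((2 * π * k) • (1 : Matrix (Fin 2 × Fin n) (Fin 2 × Fin n) ℝ)
            + Rot k t * QQ (fun _ => 1) l t * (Rot k t)ᵀ)ᴴ
            = ((2 * π * k) • (1 : Matrix (Fin 2 × Fin n) (Fin 2 × Fin n) ℝ)
            + Rot k t * QQ (fun _ => 1) l t * (Rot k t)ᵀ)ᵀ := by
          ext i j
          simp [Matrix.conjTranspose_apply, Matrix.transpose_apply]
        rw [this, htr]
      · intro x hx
        have hxx : 0 < x ⬝ᵥ x := dot_self_pos hx
        set z := (Rot k t)ᵀ *ᵥ x with hz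
        have hzz : z ⬝ᵥ z = x ⬝ᵥ x := by
          rw [hz, Matrix.dotProduct_mulVec ((Rot k t)ᵀ *ᵥ x) (Rot k t)ᵀ x,
            Matrix.vecMul_transpose, Matrix.mulVec_mulVec, Rot_mul_RotT, Matrix.one_mulVec]
        have hsplit : x ⬝ᵥ (((2 * π * k) • (1 : Matrix (Fin 2 × Fin n) (Fin 2 × Fin n) ℝ)
            + Rot k t * QQ (fun _ => 1) l t * (Rot k t)ᵀ) *ᵥ x)
            = (2 * π * k) * (x ⬝ᵥ x) + z ⬝ᵥ (QQ (fun _ => 1) l t *ᵥ z) := by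
          rw [Matrix.add_mulVec, dotProduct_add]
          congr 1
          · rw [Matrix.smul_mulVec, Matrix.one_mulVec, dotProduct_smul,
              smul_eq_mul]
          · rw [← Matrix.mulVec_mulVec, ← Matrix.mulVec_mulVec]
            rw [show x ⬝ᵥ (Rot k t *ᵥ (QQ (fun _ => 1) l t *ᵥ ((Rot k t)ᵀ *ᵥ x)))
                = (x ᵥ* Rot k t) ⬝ᵥ (QQ (fun _ => 1) l t *ᵥ ((Rot k t)ᵀ *ᵥ x)) from
              Matrix.dotProduct_mulVec _ _ _]
            rw [← Matrix.mulVec_transpose]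
        have hq := QQ_quadform l t (fun _ => 1) z
        rw [hzz] at hq
        have hbd := hkb t ht
        have hq' : -(bb (fun _ => (1 : Matrix (Fin 2 × Fin n) (Fin 2 × Fin n) ℝ)) l t * (x ⬝ᵥ x))
            ≤ z ⬝ᵥ (QQ (fun _ => 1) l t *ᵥ z) := neg_le_of_abs_le hq
        have : 0 < (2 * π * k) * (x ⬝ᵥ x) + z ⬝ᵥ (QQ (fun _ => 1) l t *ᵥ z) := by
          nlinarith
        show 0 < _
        simpa [hsplit] using this
    · intro i j
      exact mu_deriv l k M₀ t i j


end PosPath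


/-- Any two elements of `Sp(2n)` can be joined by a positive path: a `C¹` path `μ`
with `μ(0) = M₀`, `μ(1) = M₁`, and `μ'(t) = J P(t) μ(t)` for a continuous family of
symmetric positive definite matrices `P(t)`. -/
theorem join_by_positive_path {n : ℕ}
    (M₀ M₁ : Matrix (Fin 2 × Fin n) (Fin 2 × Fin n) ℝ)
    (h₀ : M₀ᵀ * Jn n * M₀ = Jn n) (h₁ : M₁ᵀ * Jn n * M₁ = Jn n) :
    ∃ μ P : ℝ → Matrix (Fin 2 × Fin n) (Fin 2 × Fin n) ℝ,
      μ 0 = M₀ ∧ μ 1 = M₁ ∧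
      (∀ t ∈ Icc (0:ℝ) 1, (μ t)ᵀ * Jn n * μ t = Jn n) ∧
      (∀ i j, ContinuousOn (fun t => P t i j) (Icc (0:ℝ) 1)) ∧
      ∀ t ∈ Icc (0:ℝ) 1, (P t)ᵀ = P t ∧ (P t).PosDef ∧
        ∀ i j, HasDerivAt (fun s => μ s i j) ((Jn n * P t * μ t) i j) t := by
  exact PosPath.main M₀ M₁ h₀ h₁
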